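/- Let S ⊆ ℝⁿ be closed, O ⊆ ℝⁿ nonempty and bounded with closure O̅, x* ∈ S with S ∩ O̅ = {x*}. Suppose there exist δ > 0 and λ̄ ∈ (0,1) such that dist(x,O) ≥ λ̄‖x−x*‖ for all x ∈ S with ‖x−x*‖ < δ. Then there exists λ ∈ (0,1) such that dist(x,O) ≥ λ‖x−x*‖ for all x ∈ S. -/
import Mathlib


open Metric Set

/-- If the local bound `dist(x,O) ≥ λ̄‖x−x*‖` holds near `x*` on a closed set `S`
meeting the closure of the bounded set `O` only at `x*`, then a global constant `λ ∈ (0,1)`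
works on all of `S`. -/
theorem stmt6 {n : ℕ} (S O : Set (EuclideanSpace ℝ (Fin n)))
    (xstar : EuclideanSpace ℝ (Fin n))
    (hS : IsClosed S) (hne : O.Nonempty) (hbd : Bornology.IsBounded O)
    (hxS : xstar ∈ S) (hcap : S ∩ closure O = {xstar})
    (δ lam' : ℝ) (hδ : 0 < δ) (hlam'0 : 0 < lam') (hlam'1 : lam' < 1)
    (hloc : ∀ x ∈ S, ‖x - xstar‖ < δ → lam' * ‖x - xstar‖ ≤ Metric.infDist x O) :
    ∃ lam : ℝ, 0 < lam ∧ lam < 1 ∧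
      ∀ x ∈ S, lam * ‖x - xstar‖ ≤ Metric.infDist x O := by
  -- choose a radius R ≥ δ containing O
  obtain ⟨R0, hR0⟩ := hbd.subset_closedBall xstar
  set R : ℝ := max R0 δ with hRdef
  have hRδ : δ ≤ R := le_max_right _ _
  have hR0' : 0 < R := lt_of_lt_of_le hδ hRδ
  have hOR : O ⊆ closedBall xstar R := hR0.trans (closedBall_subset_closedBall (le_max_left _ _))
  -- far bound: if dist x xstar ≥ 2R then infDist x O ≥ dist x xstar / 2
  have hfar : ∀ x : EuclideanSpace ℝ (Fin n), 2 * R ≤ dist x xstar →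
      dist x xstar / 2 ≤ infDist x O := by
    intro x hx
    by_contra h
    push_neg at h
    have h' : infDist x O < dist x xstar - R := by
      have : dist x xstar / 2 ≤ dist x xstar - R := by linarith
      linarith
    obtain ⟨y, hyO, hy⟩ := (infDist_lt_iff hne).1 h'
    have hyR : dist y xstar ≤ R := by simpa [mem_closedBall, dist_comm] using hOR hyO
    have := dist_triangle x y xstar
    linarith
  -- positivity on S away from xstar
  have hpos : ∀ x ∈ S, x ≠ xstar → 0 < infDist x O := by
    intro x hx hxne
    rcases lt_or_eq_of_le (infDist_nonneg (x := x) (s := O)) with h | h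
    · exact h
    · exfalso
      have hxcl : x ∈ closure O := (mem_closure_iff_infDist_zero hne).2 h.symm
      have : x ∈ S ∩ closure O := ⟨hx, hxcl⟩
      rw [hcap] at this
      exact hxne this
  -- middle region
  set K : Set (EuclideanSpace ℝ (Fin n)) :=
    S ∩ (closedBall xstar (2 * R) \ ball xstar δ) with hKdef
  have hKclosed : IsClosed K :=
    hS.inter (Metric.isClosed_closedBall.sdiff isOpen_ball)
  have hKcpt : IsCompact K := isCompact_of_isClosed_isBounded hKclosed
    ((Metric.isBounded_closedBall (x := xstar) (r := 2 * R)).subset (fun x hx => hx.2.1))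
  -- the constant on the middle region
  obtain ⟨c, hc0, hc⟩ : ∃ c : ℝ, 0 < c ∧ ∀ x ∈ K, c * dist x xstar ≤ infDist x O := by
    rcases K.eq_empty_or_nonempty with hKe | hKne
    · exact ⟨1, one_pos, by intro x hx; rw [hKe] at hx; exact absurd hx (notMem_empty x)⟩
    · obtain ⟨x0, hx0K, hx0min'⟩ :=
        hKcpt.exists_isMinOn hKne (continuous_infDist_pt O).continuousOn
      have hx0min : ∀ x ∈ K, infDist x0 O ≤ infDist x O := fun x hx => hx0min' hx
      have hx0ne : x0 ≠ xstar := by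
        intro h
        have : δ ≤ dist x0 xstar := by
          have := hx0K.2.2
          simpa [mem_ball] using this
        rw [h] at this
        simp at this
        linarith
      have hm : 0 < infDist x0 O := hpos x0 hx0K.1 hx0ne
      refine ⟨infDist x0 O / (2 * R), by positivity, ?_⟩
      intro x hxK
      have h1 : dist x xstar ≤ 2 * R := hxK.2.1
      have h2 : infDist x0 O ≤ infDist x O := hx0min x hxK
      have : infDist x0 O / (2 * R) * dist x xstar ≤ infDist x0 O := by
        rw [div_mul_eq_mul_div, div_le_iff₀ (by positivity)]
        nlinarith [infDist_nonneg (x := x0) (s := O)]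
      linarith
  -- global constant
  refine ⟨min lam' (min (1/2) c), by positivity, lt_of_le_of_lt (min_le_left _ _) hlam'1, ?_⟩
  intro x hxS'
  rw [← dist_eq_norm]
  rcases lt_or_ge (dist x xstar) δ with h | h
  · calc min lam' (min (1/2) c) * dist x xstar ≤ lam' * dist x xstar := by
          apply mul_le_mul_of_nonneg_right (min_le_left _ _) dist_nonneg
      _ ≤ infDist x O := by
          have := hloc x hxS' (by rwa [dist_eq_norm] at h)
          rwa [← dist_eq_norm] at this
  · rcases le_or_gt (dist x xstar) (2 * R) with h2 | h2
    · have hxK : x ∈ K := ⟨hxS', mem_closedBall.2 h2, by simpa [mem_ball] using not_lt.2 h⟩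
      calc min lam' (min (1/2) c) * dist x xstar ≤ c * dist x xstar := by
            apply mul_le_mul_of_nonneg_right ((min_le_right _ _).trans (min_le_right _ _)) dist_nonneg
        _ ≤ infDist x O := hc x hxK
    · calc min lam' (min (1/2) c) * dist x xstar ≤ (1/2) * dist x xstar := by
            apply mul_le_mul_of_nonneg_right ((min_le_right _ _).trans (min_le_left _ _)) dist_nonneg
        _ = dist x xstar / 2 := by ring
        _ ≤ infDist x O := hfar x h2.le
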